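/- Let T be a d-dimensional simplex in ℝ^d with vertices p₀,…,p_d, let p be an interior point with barycentric coordinates β₀,…,β_d > 0, let (I,J) be a pair of disjoint sets with I ∪ J = {0,…,d} and J ≠ ∅, and let T_I = {x ∈ T : l_i(x) = β_i for all i ∈ I}, where l_i are the barycentric coordinate functions. Then T_I is a simplex of dimension |J| − 1 whose vertices are the points ∑_{i∈I} β_i p_i + β_J p_j for j ∈ J, where β_J = ∑_{j∈J} β_j. -/

import Mathlib

/-- The section `T_I` of a simplex through an interior point `p`, parallel to the face
`F_I`, is a simplex of dimension `|J| - 1` with vertices `∑_{i∈I} β_i p_i + β_J p_j`, `j ∈ J`. -/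
theorem stmt8 (d : ℕ) (p : Fin (d + 1) → Fin d → ℝ) (hp : AffineIndependent ℝ p)
    (l : Fin (d + 1) → ((Fin d → ℝ) →ᵃ[ℝ] ℝ))
    (hl : ∀ i j : Fin (d + 1), l i (p j) = if i = j then 1 else 0)
    (β : Fin (d + 1) → ℝ) (hβpos : ∀ i, 0 < β i) (hβsum : ∑ i, β i = 1)
    (I J : Finset (Fin (d + 1))) (hdisj : Disjoint I J)
    (hunion : I ∪ J = Finset.univ) (hJ : J.Nonempty)
    (T TI : Set (Fin d → ℝ)) (hT : T = convexHull ℝ (Set.range p))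
    (hTI : TI = {x ∈ T | ∀ i ∈ I, l i x = β i})
    (q : J → (Fin d → ℝ))
    (hq : ∀ j : J, q j = (∑ i ∈ I, β i • p i) + (∑ k ∈ J, β k) • p (j : Fin (d + 1))) :
    TI = convexHull ℝ (Set.range q) ∧ AffineIndependent ℝ q := by
  classical
  have hcard : Fintype.card (Fin (d+1)) = Module.finrank ℝ (Fin d → ℝ) + 1 := by rw [show Module.finrank ℝ (Fin d → ℝ) = d from Module.finrank_fin_fun ℝ, Fintype.card_fin]
  have hspan : affineSpan ℝ (Set.range p) = ⊤ :=
    hp.affineSpan_eq_top_iff_card_eq_finrank_add_one.mpr hcard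
  let b : AffineBasis (Fin (d+1)) ℝ (Fin d → ℝ) := ⟨p, hp, hspan⟩
  have hbp : ∀ i, b i = p i := fun _ => rfl
  set A : Fin d → ℝ := ∑ i ∈ I, β i • p i with hA
  set βJ : ℝ := ∑ k ∈ J, β k with hβJ
  have hβJpos : 0 < βJ := Finset.sum_pos (fun i _ => hβpos i) hJ
  have hsplit : ∑ i ∈ I, β i + βJ = 1 := by
    rw [hβJ, ← Finset.sum_union hdisj, hunion, hβsum]
  -- l equals barycentric coordinates
  have hlc : ∀ i x, l i x = b.coord i x := by
    intro i x
    conv_lhs => rw [← b.affineCombination_coord_eq_self x]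
    rw [Finset.map_affineCombination _ _ _ (b.sum_coord_apply_eq_one x),
      Finset.affineCombination_eq_linear_combination _ _ _ (b.sum_coord_apply_eq_one x)]
    simp only [Function.comp_apply, hbp, hl, smul_eq_mul, mul_ite, mul_one, mul_zero]
    rw [Finset.sum_ite_eq Finset.univ i (fun j => b.coord j x)]
    simp
  have hhull : T = { x | ∀ i, 0 ≤ b.coord i x } := by
    rw [hT, show Set.range p = Set.range b from rfl, b.convexHull_eq_nonneg_coord]
  -- the weights of q j
  have hjI : ∀ j : J, (j : Fin (d+1)) ∉ I := fun j => fun h =>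
    (Finset.disjoint_left.mp hdisj h) j.2
  set w : J → Fin (d+1) → ℝ := fun j i => if i ∈ I then β i else (if i = (j : Fin (d+1)) then βJ else 0) with hw
  have hwsum : ∀ j : J, ∑ i, w j i = 1 := by
    intro j
    rw [← hunion, Finset.sum_union hdisj]
    have h1 : ∑ i ∈ I, w j i = ∑ i ∈ I, β i :=
      Finset.sum_congr rfl fun i hi => by simp [hw, hi]
    have h2 : ∑ i ∈ J, w j i = βJ := by
      rw [Finset.sum_eq_single (j : Fin (d+1))]
      · simp [hw, hjI j]
      · intro i hi hne
        simp [hw, Finset.disjoint_right.mp hdisj hi, hne]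
      · intro h; exact absurd j.2 h
    rw [h1, h2, hsplit]
  have hqcomb : ∀ j : J, q j = Finset.univ.affineCombination ℝ p (w j) := by
    intro j
    rw [Finset.affineCombination_eq_linear_combination _ _ _ (hwsum j), hq j]
    rw [← hunion, Finset.sum_union hdisj]
    congr 1
    · exact (Finset.sum_congr rfl fun i hi => by simp [hw, hi]).symm
    · rw [Finset.sum_eq_single (j : Fin (d+1))]
      · simp [hw, hjI j]
      · intro i hi hne
        simp [hw, Finset.disjoint_right.mp hdisj hi, hne]
      · intro h; exact absurd j.2 h
  have hcoordq : ∀ (j : J) (i : Fin (d+1)), b.coord i (q j) = w j i := by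
    intro j i
    rw [hqcomb j]
    exact b.coord_apply_combination_of_mem (Finset.mem_univ i) (hwsum j)
  -- range q ⊆ TI
  have hrange : Set.range q ⊆ TI := by
    rintro _ ⟨j, rfl⟩
    rw [hTI]
    constructor
    · rw [hhull]
      intro i
      rw [hcoordq j i, hw]
      dsimp only
      split
      · exact (hβpos i).le
      · split
        · exact hβJpos.le
        · exact le_refl 0
    · intro i hi
      rw [hlc, hcoordq j i]
      simp [hw, hi]
  -- TI convex
  have hTIconv : Convex ℝ TI := by
    have : TI = T ∩ ⋂ i ∈ I, (l i) ⁻¹' {β i} := by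
      rw [hTI]; ext x; simp [Set.mem_iInter]
    rw [this]
    refine Convex.inter ?_ (convex_iInter fun i => convex_iInter fun _ =>
      (convex_singleton (β i)).affine_preimage (l i))
    rw [hT]; exact convex_convexHull ℝ _
  -- TI ⊆ hull q
  have hsub : TI ⊆ convexHull ℝ (Set.range q) := by
    intro x hx
    rw [hTI] at hx
    obtain ⟨hxT, hxI⟩ := hx
    have hge : ∀ i, 0 ≤ b.coord i x := by rw [hhull] at hxT; exact hxT
    have hcI : ∀ i ∈ I, b.coord i x = β i := fun i hi => by rw [← hlc]; exact hxI i hi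
    have hsumJ : ∑ j ∈ J, b.coord j x = βJ := by
      have := b.sum_coord_apply_eq_one x
      rw [← hunion, Finset.sum_union hdisj] at this
      rw [Finset.sum_congr rfl hcI] at this
      linarith [hsplit]
    set c : J → ℝ := fun j => b.coord j x / βJ with hc
    have hcsum : ∑ j : J, c j = 1 := by
      rw [← Finset.sum_div, Finset.sum_coe_sort J (fun j => b.coord j x), hsumJ,
        div_self hβJpos.ne']
    have hcx : ∑ j : J, c j • q j = x := by
      have hx' : x = A + ∑ j ∈ J, b.coord j x • p j := by
        conv_lhs => rw [← b.linear_combination_coord_eq_self x]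
        rw [← hunion, Finset.sum_union hdisj, hA]
        congr 1
        exact Finset.sum_congr rfl fun i hi => by rw [hbp, hcI i hi]
      calc ∑ j : J, c j • q j
          = ∑ j : J, (c j • A + (c j * βJ) • p (j : Fin (d+1))) := by
            refine Finset.sum_congr rfl fun j _ => ?_
            rw [hq j, smul_add, smul_smul]
        _ = (∑ j : J, c j) • A + ∑ j : J, (c j * βJ) • p (j : Fin (d+1)) := by
            rw [Finset.sum_add_distrib, Finset.sum_smul]
        _ = A + ∑ j ∈ J, b.coord j x • p j := by
            rw [hcsum, one_smul]
            congr 1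
            rw [← Finset.sum_coe_sort J (fun j => b.coord j x • p j)]
            refine Finset.sum_congr rfl fun j _ => ?_
            rw [hc]
            congr 1
            field_simp
        _ = x := hx'.symm
    rw [← hcx, ← Finset.univ.centerMass_eq_of_sum_1 _ hcsum]
    exact Finset.univ.centerMass_mem_convexHull (w := c) (z := q)
      (fun j _ => div_nonneg (hge j.1) hβJpos.le)
      (lt_of_lt_of_eq one_pos hcsum.symm) (fun j _ => Set.mem_range_self j)
  refine ⟨le_antisymm hsub (convexHull_min hrange hTIconv), ?_⟩
  -- affine independence
  let f : (Fin d → ℝ) →ᵃ[ℝ] (Fin d → ℝ) :=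
    { toFun := fun x => A + βJ • x
      linear := βJ • LinearMap.id
      map_vadd' := by
        intro x v
        simp [smul_add]
        abel }
  have hfinj : Function.Injective f := by
    intro x y hxy
    have : A + βJ • x = A + βJ • y := hxy
    have h2 : βJ • x = βJ • y := by
      exact add_left_cancel this
    exact smul_right_injective _ hβJpos.ne' h2
  have hqf : q = f ∘ (p ∘ (Function.Embedding.subtype (fun x => x ∈ J))) := by
    funext j
    rw [hq j]
    rfl
  rw [hqf]
  exact (hp.comp_embedding _).map' f hfinj
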